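/- Let L be a countably approximating poset with a countable σ-basis B. Then L with the σ-Scott topology is a c-well-filtered space. -/
import Mathlib


universe u

/-- A set is saturated if it equals the intersection of its open neighbourhoods. -/
def IsSaturatedSet {X : Type u} [TopologicalSpace X] (A : Set X) : Prop :=
  A = ⋂₀ {U : Set X | IsOpen U ∧ A ⊆ U}

/-- A family of sets is countably filtered (under `⊆`) if every countable subfamily
has a lower bound in the family. -/
def CntFilteredFam {X : Type u} (S : Set (Set X)) : Prop :=
  ∀ T ⊆ S, T.Countable → ∃ L ∈ S, ∀ t ∈ T, L ⊆ t

/-- A family of sets is countably directed (under `⊆`) if every countable subfamily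
has an upper bound in the family. -/
def CntDirectedFam {X : Type u} (S : Set (Set X)) : Prop :=
  ∀ T ⊆ S, T.Countable → ∃ U ∈ S, ∀ t ∈ T, t ⊆ U

/-- A space is c-well-filtered if for every countably filtered family of saturated
Lindelöf subsets whose intersection is contained in an open `U`, some member is contained in `U`. -/
def CWellFiltered (X : Type u) [TopologicalSpace X] : Prop :=
  ∀ S : Set (Set X), (∀ K ∈ S, IsSaturatedSet K ∧ IsLindelof K) →
    CntFilteredFam S → ∀ U : Set X, IsOpen U → ⋂₀ S ⊆ U → ∃ K ∈ S, K ⊆ U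

/-- A subset `D` is countably directed w.r.t. `le` if every countable subset of `D`
has an upper bound in `D`. -/
def CntDirected {α : Type u} (le : α → α → Prop) (D : Set α) : Prop :=
  ∀ E ⊆ D, E.Countable → ∃ d ∈ D, ∀ e ∈ E, le e d

/-- `a` is a least upper bound of `D` w.r.t. `le`. -/
def RIsLUB {α : Type u} (le : α → α → Prop) (D : Set α) (a : α) : Prop :=
  (∀ d ∈ D, le d a) ∧ ∀ b, (∀ d ∈ D, le d b) → le a b

/-- Countably directed complete: every countably directed subset has a least upper bound. -/
def CDComplete {α : Type u} (le : α → α → Prop) : Prop :=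
  ∀ D : Set α, CntDirected le D → ∃ a, RIsLUB le D a

/-- `x` is countably way-below `y`. -/
def CWayBelow {α : Type u} (le : α → α → Prop) (x y : α) : Prop :=
  ∀ D : Set α, CntDirected le D → ∀ a, RIsLUB le D a → le y a → ∃ d ∈ D, le x d

/-- `U` is σ-Scott open: an upper set meeting every countably directed set whose sup lies in `U`. -/
def SigmaScottOpenRel {α : Type u} (le : α → α → Prop) (U : Set α) : Prop :=
  (∀ x ∈ U, ∀ y, le x y → y ∈ U) ∧
  ∀ D : Set α, CntDirected le D → ∀ a, RIsLUB le D a → a ∈ U → ∃ d ∈ D, d ∈ U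

/-- `F` is countably filtered w.r.t. `le`: every countable subset has a lower bound in `F`. -/
def CntFilteredRel {α : Type u} (le : α → α → Prop) (F : Set α) : Prop :=
  ∀ E ⊆ F, E.Countable → ∃ l ∈ F, ∀ e ∈ E, le l e

/-- Countably approximating: countably directed complete and each `x` is the sup of
the countably directed set of elements countably way-below `x`. -/
def CntApprox {α : Type u} (le : α → α → Prop) : Prop :=
  CDComplete le ∧
    ∀ x, CntDirected le {y | CWayBelow le y x} ∧ RIsLUB le {y | CWayBelow le y x} x

/-- `B` is a σ-basis: for each `x`, `B ∩ ⇓꜀x` is countably directed with sup `x`. -/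
def IsSigmaBasis {α : Type u} (le : α → α → Prop) (B : Set α) : Prop :=
  ∀ x, CntDirected le (B ∩ {y | CWayBelow le y x}) ∧
    RIsLUB le (B ∩ {y | CWayBelow le y x}) x

/-- The σ-Scott topology on a preorder. -/
def sigmaScottTopology (L : Type u) [Preorder L] : TopologicalSpace L where
  IsOpen U := SigmaScottOpenRel (· ≤ · : L → L → Prop) U
  isOpen_univ := by
    refine ⟨fun _ _ _ _ => trivial, ?_⟩
    intro D hD a _ _
    obtain ⟨d, hd, -⟩ := hD ∅ (Set.empty_subset D) Set.countable_empty
    exact ⟨d, hd, trivial⟩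
  isOpen_inter := by
    rintro s t ⟨hsu, hs⟩ ⟨htu, ht⟩
    refine ⟨fun x hx y hxy => ⟨hsu x hx.1 y hxy, htu x hx.2 y hxy⟩, ?_⟩
    intro D hD a ha haU
    obtain ⟨d1, hd1, hd1s⟩ := hs D hD a ha haU.1
    obtain ⟨d2, hd2, hd2t⟩ := ht D hD a ha haU.2
    obtain ⟨d3, hd3, h3⟩ := hD {d1, d2} (by rintro e (rfl | rfl) <;> assumption)
      ((Set.finite_singleton d2).insert d1).countable
    exact ⟨d3, hd3, hsu d1 hd1s d3 (h3 d1 (by simp)), htu d2 hd2t d3 (h3 d2 (by simp))⟩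
  isOpen_sUnion := by
    intro S hS
    refine ⟨?_, ?_⟩
    · intro x hx y hxy
      obtain ⟨s, hsS, hxs⟩ := hx
      exact ⟨s, hsS, (hS s hsS).1 x hxs y hxy⟩
    · intro D hD a ha haU
      obtain ⟨s, hsS, has⟩ := haU
      obtain ⟨d, hd, hds⟩ := (hS s hsS).2 D hD a ha has
      exact ⟨d, hd, s, hsS, hds⟩

/-- Auxiliary: countably way-below implies below. -/
lemma cwayBelow_le_aux {L : Type u} [PartialOrder L] {b x : L}
    (h : CWayBelow ((· ≤ ·) : L → L → Prop) b x) : b ≤ x := by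
  have hdir : CntDirected ((· ≤ ·) : L → L → Prop) ({x} : Set L) := by
    intro E hE _
    exact ⟨x, Set.mem_singleton x, fun e he => le_of_eq (hE he)⟩
  have hlub : RIsLUB ((· ≤ ·) : L → L → Prop) ({x} : Set L) x :=
    ⟨fun d hd => le_of_eq hd, fun c hc => hc x (Set.mem_singleton x)⟩
  obtain ⟨d, hd, hbd⟩ := h {x} hdir x hlub le_rfl
  exact hbd.trans (le_of_eq hd)

/-- a countably approximating poset with a countable σ-basis is
c-well-filtered in its σ-Scott topology. -/
theorem stmt14 {L : Type u} [PartialOrder L]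
    (happrox : CntApprox ((· ≤ ·) : L → L → Prop))
    (B : Set L) (hB : B.Countable) (hBasis : IsSigmaBasis ((· ≤ ·) : L → L → Prop) B) :
    @CWellFiltered L (sigmaScottTopology L) := by
  classical
  intro S hSsat hSfil U hU hsub
  by_contra hcon
  push_neg at hcon
  have hUo : SigmaScottOpenRel ((· ≤ ·) : L → L → Prop) U := hU
  -- the set of "bad" basis elements: those missing some open neighbourhood of some member of S
  set Bad : Set L := {b | b ∈ B ∧ ¬ ∀ W : Set L,
      SigmaScottOpenRel ((· ≤ ·) : L → L → Prop) W → (∃ K ∈ S, K ⊆ W) → b ∈ W} with hBadDef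
  have hBadB : Bad ⊆ B := fun b hb => hb.1
  have hBadCnt : Bad.Countable := hB.mono hBadB
  haveI : Countable ↥Bad := hBadCnt.to_subtype
  -- choose a witnessing open set for each bad basis element
  have hchoice : ∀ b : ↥Bad, ∃ V : Set L,
      SigmaScottOpenRel ((· ≤ ·) : L → L → Prop) V ∧ (∃ K ∈ S, K ⊆ V) ∧ (b : L) ∉ V := by
    rintro ⟨b, hbB, hb⟩
    push_neg at hb
    obtain ⟨V, hVo, hVwit, hbV⟩ := hb
    exact ⟨V, hVo, hVwit, hbV⟩
  choose Vf hVfOpen hVfWit hVfNot using hchoice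
  choose Kf hKfS hKfV using hVfWit
  -- a common member of S below all the chosen K's
  obtain ⟨L₀, hL₀S, hL₀⟩ := hSfil (Set.range Kf)
    (by rintro _ ⟨b, rfl⟩; exact hKfS b) (Set.countable_range Kf)
  obtain ⟨x, hxL₀, hxU⟩ := Set.not_subset.mp (hcon L₀ hL₀S)
  -- the countable intersection of the chosen open sets is open
  set W : Set L := ⋂ b : ↥Bad, Vf b with hWdef
  have hWopen : SigmaScottOpenRel ((· ≤ ·) : L → L → Prop) W := by
    constructor
    · intro y hy z hyz
      rw [hWdef, Set.mem_iInter] at hy ⊢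
      exact fun b => (hVfOpen b).1 y (hy b) z hyz
    · intro D hD a ha haW
      rw [hWdef, Set.mem_iInter] at haW
      have h1 : ∀ b : ↥Bad, ∃ d, d ∈ D ∧ d ∈ Vf b := by
        intro b
        obtain ⟨d, hd, hdV⟩ := (hVfOpen b).2 D hD a ha (haW b)
        exact ⟨d, hd, hdV⟩
      choose f hfD hfV using h1
      obtain ⟨d, hdD, hdub⟩ := hD (Set.range f)
        (by rintro _ ⟨b, rfl⟩; exact hfD b) (Set.countable_range f)
      refine ⟨d, hdD, ?_⟩
      rw [hWdef, Set.mem_iInter]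
      exact fun b => (hVfOpen b).1 (f b) (hfV b) d (hdub (f b) ⟨b, rfl⟩)
  have hxW : x ∈ W := by
    rw [hWdef, Set.mem_iInter]
    exact fun b => hKfV b (hL₀ (Kf b) ⟨b, rfl⟩ hxL₀)
  -- find a basis element way below x lying in W
  obtain ⟨hdir, hlub⟩ := hBasis x
  obtain ⟨b, hbBx, hbW⟩ := hWopen.2 _ hdir x hlub hxW
  -- b is a "good" basis element
  have hbGood : ∀ V : Set L, SigmaScottOpenRel ((· ≤ ·) : L → L → Prop) V →
      (∃ K ∈ S, K ⊆ V) → b ∈ V := by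
    by_contra hbad
    have hbBad : b ∈ Bad := ⟨hbBx.1, hbad⟩
    have : b ∈ Vf ⟨b, hbBad⟩ := by
      rw [hWdef, Set.mem_iInter] at hbW
      exact hbW ⟨b, hbBad⟩
    exact hVfNot ⟨b, hbBad⟩ this
  have hbx : b ≤ x := cwayBelow_le_aux hbBx.2
  have hbU : b ∉ U := fun h => hxU (hUo.1 b h x hbx)
  have hbInt : b ∈ ⋂₀ S := by
    intro K hK
    have hKsat := (hSsat K hK).1
    rw [hKsat]
    rintro V2 ⟨hV2o, hKV2⟩
    exact hbGood V2 hV2o ⟨K, hK, hKV2⟩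
  exact hbU (hsub hbInt)
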